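/- For all θ, λ ∈ ℝ, setting κ = λ·(1−λ), the following identity holds: 1 − |γ(θ,λ)|² = 4·κ·f(κ,θ), where f(κ,θ) = 2 − 6κ + 2κ² − κ³ + (1 − 3κ − 2κ² + 2κ³)·cos θ − κ³·cos²θ. -/

import Mathlib

/-- The determinant `γ(θ,λ)` of the CIP amplification matrix. -/
noncomputable def cipγ (θ lam : ℝ) : ℂ :=
  (1 - (lam : ℂ))^4 + Complex.exp (-(2 * Complex.I * θ)) * lam^4
    - 2 * Complex.exp (-(Complex.I * θ)) * lam * (1 - 2*lam^2 + lam^3)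

/-- With `κ = λ(1−λ)`,
`1 − |γ(θ,λ)|² = 4κ·(2 − 6κ + 2κ² − κ³ + (1 − 3κ − 2κ² + 2κ³)cos θ − κ³cos²θ)`. -/
theorem stmt_10 (θ lam κ : ℝ) (hκ : κ = lam * (1 - lam)) :
    1 - ‖cipγ θ lam‖ ^ 2
      = 4 * κ * (2 - 6*κ + 2*κ^2 - κ^3 + (1 - 3*κ - 2*κ^2 + 2*κ^3) * Real.cos θ
          - κ^3 * Real.cos θ ^ 2) := by
  subst hκ
  set c := Real.cos θ with hc
  set s := Real.sin θ with hsin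
  have hs : s ^ 2 = 1 - c ^ 2 := by
    have := Real.sin_sq_add_cos_sq θ; rw [← hc, ← hsin] at this; linarith
  have e1 : Complex.exp (-(Complex.I * θ)) = (c : ℂ) - s * Complex.I := by
    rw [show -(Complex.I * (θ:ℂ)) = ((-θ:ℝ):ℂ) * Complex.I by push_cast; ring,
      Complex.exp_mul_I]
    simp [← Complex.ofReal_cos, ← Complex.ofReal_sin, Real.cos_neg, Real.sin_neg, hc, hsin]
    ring
  have e2 : Complex.exp (-(2 * Complex.I * θ)) = ((c : ℂ) - s * Complex.I)^2 := by
    rw [← e1, ← Complex.exp_nat_mul]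
    norm_num; ring_nf
  have key : cipγ θ lam =
      ((((1-lam)^4 + (c^2 - s^2)*lam^4 - 2*c*lam*(1 - 2*lam^2 + lam^3)) : ℝ) : ℂ)
        + (((-2*c*s*lam^4 + 2*s*lam*(1 - 2*lam^2 + lam^3)) : ℝ) : ℂ) * Complex.I := by
    rw [cipγ, e1, e2]
    have hI : Complex.I^2 = -1 := Complex.I_sq
    push_cast
    ring_nf
    rw [hI]
    ring
  rw [Complex.sq_norm, key, Complex.normSq_add_mul_I]
  linear_combination (-lam^8 * s^2 - lam^8*(1-c^2) + 2*lam^4*((1-lam)^4 + c^2*lam^4 - 2*c*lam*(1 - 2*lam^2 + lam^3)) - (-2*c*lam^4 + 2*lam*(1 - 2*lam^2 + lam^3))^2) * hs
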